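/- Fix μ > 0. The parametrization of single anisotropic basis functions is injective on positive weights: if α, α' > 0, β, β', γ, γ' ∈ ℝ and φ_{α,β,γ}(v) = φ_{α',β',γ'}(v) for every v ∈ ℝ², then α = α', β = β', and γ = γ'. -/
import Mathlib


/-- The 2×2 stretch-and-slide matrix `R(β,γ) = μ·!![exp β, γ; 0, exp(−β)]`. -/
noncomputable def Rmat (μ β γ : ℝ) : Matrix (Fin 2) (Fin 2) ℝ :=
  μ • !![Real.exp β, γ; 0, Real.exp (-β)]

/-- The single anisotropic basis function level-set function
`φ_{α,β,γ}(v) = tanh(α/2)·exp(−‖R(β,γ)·v‖²)` on `ℝ²` (Euclidean norm). -/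
noncomputable def phiAbf (μ α β γ : ℝ) (v : EuclideanSpace ℝ (Fin 2)) : ℝ :=
  Real.tanh (α / 2) *
    Real.exp (-‖(WithLp.equiv 2 (Fin 2 → ℝ)).symm
      ((Rmat μ β γ).mulVec ((WithLp.equiv 2 (Fin 2 → ℝ)) v))‖ ^ 2)

/-- The `c`-level set `Γ(α,β,γ) = {v ∈ ℝ² : φ_{α,β,γ}(v) = c}`. -/
noncomputable def GammaAbf (μ c α β γ : ℝ) : Set (EuclideanSpace ℝ (Fin 2)) :=
  {v | phiAbf μ α β γ v = c}

lemma tanh_inj {a b : ℝ} (hab : Real.tanh a = Real.tanh b) : a = b := by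
  rw [Real.tanh_eq_sinh_div_cosh, Real.tanh_eq_sinh_div_cosh] at hab
  have ha := Real.cosh_pos (x := a)
  have hb := Real.cosh_pos (x := b)
  have h2 : Real.sinh a * Real.cosh b = Real.sinh b * Real.cosh a := by
    field_simp at hab; linarith
  have h3 : Real.sinh (a - b) = 0 := by
    rw [Real.sinh_sub]; linarith
  have := Real.sinh_injective (h3.trans Real.sinh_zero.symm)
  linarith

lemma phi_eval (μ α β γ a b : ℝ) :
    phiAbf μ α β γ ((WithLp.equiv 2 (Fin 2 → ℝ)).symm ![a, b]) =
      Real.tanh (α / 2) *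
        Real.exp (-((μ * (Real.exp β * a + γ * b)) ^ 2 +
          (μ * (Real.exp (-β) * b)) ^ 2)) := by
  have hnorm : ∀ x : Fin 2 → ℝ,
      ‖(WithLp.equiv 2 (Fin 2 → ℝ)).symm x‖ ^ 2 = x 0 ^ 2 + x 1 ^ 2 := by
    intro x
    rw [EuclideanSpace.norm_eq, Real.sq_sqrt (by positivity)]
    simp [Fin.sum_univ_two, sq_abs]
  simp only [phiAbf, Equiv.apply_symm_apply, hnorm, Rmat]
  congr 2
  simp [Matrix.mulVec, dotProduct, Fin.sum_univ_two]
  ring_nf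

/-- For fixed `μ > 0`, the parametrization of single anisotropic basis functions is
injective on positive weights: equal functions force equal parameters. -/
theorem phiAbf_injective (μ : ℝ) (hμ : 0 < μ) (α α' β β' γ γ' : ℝ)
    (hα : 0 < α) (hα' : 0 < α')
    (h : ∀ v : EuclideanSpace ℝ (Fin 2), phiAbf μ α β γ v = phiAbf μ α' β' γ' v) :
    α = α' ∧ β = β' ∧ γ = γ' := by
  have key : ∀ a b : ℝ,
      Real.tanh (α / 2) * Real.exp (-((μ * (Real.exp β * a + γ * b)) ^ 2 +
          (μ * (Real.exp (-β) * b)) ^ 2)) =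
      Real.tanh (α' / 2) * Real.exp (-((μ * (Real.exp β' * a + γ' * b)) ^ 2 +
          (μ * (Real.exp (-β') * b)) ^ 2)) := by
    intro a b
    have := h ((WithLp.equiv 2 (Fin 2 → ℝ)).symm ![a, b])
    rwa [phi_eval, phi_eval] at this
  -- α = α'
  have h0 := key 0 0
  simp at h0
  have hαα : α = α' := by
    have := tanh_inj h0
    linarith
  subst hαα
  have htpos : 0 < Real.tanh (α / 2) := by
    rw [Real.tanh_eq_sinh_div_cosh]
    exact div_pos (Real.sinh_pos_iff.mpr (by linarith)) (Real.cosh_pos _)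
  have key2 : ∀ a b : ℝ,
      (μ * (Real.exp β * a + γ * b)) ^ 2 + (μ * (Real.exp (-β) * b)) ^ 2 =
      (μ * (Real.exp β' * a + γ' * b)) ^ 2 + (μ * (Real.exp (-β') * b)) ^ 2 := by
    intro a b
    have hk := key a b
    have := mul_left_cancel₀ (ne_of_gt htpos) hk
    have := Real.exp_injective this
    linarith
  have hμ2 : (μ : ℝ) ^ 2 ≠ 0 := by positivity
  have hsq : ∀ x : ℝ, Real.exp x ^ 2 = Real.exp (2 * x) := fun x => by
    rw [sq, ← Real.exp_add]; ring_nf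
  -- β = β'
  have hββ : β = β' := by
    have h1 : μ ^ 2 * Real.exp (2 * β) = μ ^ 2 * Real.exp (2 * β') := by
      have := key2 1 0
      simp only [mul_one, mul_zero, add_zero, zero_pow] at this
      calc μ ^ 2 * Real.exp (2 * β) = (μ * (Real.exp β * 1 + γ * 0)) ^ 2 +
            (μ * (Real.exp (-β) * 0)) ^ 2 := by rw [← hsq]; ring
        _ = (μ * (Real.exp β' * 1 + γ' * 0)) ^ 2 + (μ * (Real.exp (-β') * 0)) ^ 2 :=
            key2 1 0
        _ = μ ^ 2 * Real.exp (2 * β') := by rw [← hsq]; ring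
    have := Real.exp_injective (mul_left_cancel₀ hμ2 h1)
    linarith
  subst hββ
  -- γ = γ'
  have h01 := key2 0 1
  have h11 := key2 1 1
  have hd : 2 * μ ^ 2 * Real.exp β * γ = 2 * μ ^ 2 * Real.exp β * γ' := by
    linear_combination h11 - h01
  have hne : (2 * μ ^ 2 * Real.exp β : ℝ) ≠ 0 := by positivity
  exact ⟨rfl, rfl, mul_left_cancel₀ hne hd⟩
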